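/- arXiv:math/0601302 — 4 statements merged into one kernel-verified Lean document; each statement's English description precedes it below -/
import Mathlib

section
/- For an idempotent matrix-valued function P of two variables, the equation [∂_L∂_R P, P] = 0 is equivalent to ∂_L[∂_R P, P] + ∂_R[∂_L P, P] = 0 (the conservation-law form of the Euler–Lagrange equations). -/
attribute [local instance] Matrix.frobeniusNormedAddCommGroup Matrix.frobeniusNormedSpace Matrix.frobeniusNormedRing Matrix.frobeniusNormedAlgebra

open Matrix

/-- For an idempotent matrix-valued function P of two variables (C²),
[∂_L∂_R P, P] = 0 iff ∂_L[∂_R P, P] + ∂_R[∂_L P, P] = 0 at that point. -/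
theorem stmt_2 {N : ℕ} (P PL PR PLR : ℝ × ℝ → Matrix (Fin N) (Fin N) ℂ)
    (hPL : ∀ x : ℝ × ℝ, HasDerivAt (fun s => P (s, x.2)) (PL x) x.1)
    (hPR : ∀ x : ℝ × ℝ, HasDerivAt (fun s => P (x.1, s)) (PR x) x.2)
    (hPLR : ∀ x : ℝ × ℝ, HasDerivAt (fun s => PR (s, x.2)) (PLR x) x.1)
    (hPRL : ∀ x : ℝ × ℝ, HasDerivAt (fun s => PL (x.1, s)) (PLR x) x.2)
    (hidem : ∀ x, P x * P x = P x) (x : ℝ × ℝ) :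
    PLR x * P x = P x * PLR x ↔
      ∀ DL DR : Matrix (Fin N) (Fin N) ℂ,
        HasDerivAt (fun s => PR (s, x.2) * P (s, x.2) - P (s, x.2) * PR (s, x.2)) DL x.1 →
        HasDerivAt (fun s => PL (x.1, s) * P (x.1, s) - P (x.1, s) * PL (x.1, s)) DR x.2 →
        DL + DR = 0 := by
  have hL : HasDerivAt (fun s => PR (s, x.2) * P (s, x.2) - P (s, x.2) * PR (s, x.2))
      ((PLR x * P x + PR x * PL x) - (PL x * PR x + P x * PLR x)) x.1 :=
    ((hPLR x).mul (hPL x)).sub ((hPL x).mul (hPLR x))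
  have hR : HasDerivAt (fun s => PL (x.1, s) * P (x.1, s) - P (x.1, s) * PL (x.1, s))
      ((PLR x * P x + PL x * PR x) - (PR x * PL x + P x * PLR x)) x.2 :=
    ((hPRL x).mul (hPR x)).sub ((hPR x).mul (hPRL x))
  constructor
  · intro hc DL DR hDL hDR
    rw [hDL.unique hL, hDR.unique hR, hc]
    abel
  · intro h
    have := h _ _ hL hR
    have h2 : (2 : ℂ) • (PLR x * P x - P x * PLR x) = 0 := by
      rw [two_smul]
      rw [← this]
      abel
    have := smul_eq_zero.mp h2
    simp at this
    exact sub_eq_zero.mp this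
end

section
/- For a Hermitian idempotent P satisfying the Euler–Lagrange equation [∂_L∂_R P, P] = 0, the quantity J_L = (1/2) tr(∂_L P · ∂_L P) is independent of ξ_R, i.e., ∂_R J_L = 0. -/
attribute [local instance] Matrix.frobeniusNormedAddCommGroup Matrix.frobeniusNormedSpace
attribute [local instance] Matrix.frobeniusNormedRing Matrix.frobeniusNormedAlgebra

open Matrix

lemma trace_key {N : ℕ} (P PL PLR : Matrix (Fin N) (Fin N) ℂ)
    (hP : P * P = P) (h1 : PL * P + P * PL = PL) (hEL : PLR * P = P * PLR) :
    (PLR * PL).trace = 0 := by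
  have hPP : P * PLR * P = P * PLR := by
    rw [← hEL, mul_assoc, hP]
  have hS : (P * PLR * PL).trace = 0 := by
    have h2 : (P * PLR * PL).trace
        = (P * PLR * (PL * P)).trace + (P * PLR * (P * PL)).trace := by
      rw [← Matrix.trace_add, ← mul_add, h1]
    have t1 : (P * PLR * (PL * P)).trace = (P * PLR * PL).trace := by
      rw [← mul_assoc, Matrix.trace_mul_comm, ← mul_assoc, ← mul_assoc, hP]
    have t2 : (P * PLR * (P * PL)).trace = (P * PLR * PL).trace := by
      rw [← mul_assoc, hPP]
    rw [t1, t2] at h2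
    linear_combination -h2
  have u1 : (PLR * (PL * P)).trace = (P * PLR * PL).trace := by
    rw [← mul_assoc, Matrix.trace_mul_comm, ← mul_assoc]
  have u2 : (PLR * (P * PL)).trace = (P * PLR * PL).trace := by
    rw [← mul_assoc, hEL]
  calc (PLR * PL).trace = (PLR * (PL * P)).trace + (PLR * (P * PL)).trace := by
        rw [← Matrix.trace_add, ← mul_add, h1]
    _ = 0 := by rw [u1, u2, hS]; ring

set_option maxHeartbeats 1000000 in
/-- For a Hermitian idempotent P satisfying [∂_L∂_R P, P] = 0,
J_L = (1/2) tr(∂_L P · ∂_L P) satisfies ∂_R J_L = 0. -/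
theorem stmt_3 {N : ℕ} (P PL PR PLR : ℝ × ℝ → Matrix (Fin N) (Fin N) ℂ)
    (hPL : ∀ x : ℝ × ℝ, HasDerivAt (fun s => P (s, x.2)) (PL x) x.1)
    (hPR : ∀ x : ℝ × ℝ, HasDerivAt (fun s => P (x.1, s)) (PR x) x.2)
    (hPLR : ∀ x : ℝ × ℝ, HasDerivAt (fun s => PR (s, x.2)) (PLR x) x.1)
    (hPRL : ∀ x : ℝ × ℝ, HasDerivAt (fun s => PL (x.1, s)) (PLR x) x.2)
    (hidem : ∀ x, P x * P x = P x)
    (hherm : ∀ x, (P x)ᴴ = P x)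
    (hEL : ∀ x, PLR x * P x = P x * PLR x) :
    ∀ x : ℝ × ℝ,
      HasDerivAt (fun s => (1/2 : ℂ) * (PL (x.1, s) * PL (x.1, s)).trace) 0 x.2 := by
  intro x
  -- differentiate P² = P in the first variable to get PL x * P x + P x * PL x = PL x
  have h1 : PL x * P x + P x * PL x = PL x := by
    have hd : HasDerivAt (fun s => P (s, x.2) * P (s, x.2))
        (PL x * P x + P x * PL x) x.1 := (hPL x).mul (hPL x)
    have hd' : HasDerivAt (fun s => P (s, x.2) * P (s, x.2)) (PL x) x.1 := by
      have : (fun s => P (s, x.2) * P (s, x.2)) = fun s => P (s, x.2) := by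
        funext s; exact hidem (s, x.2)
      rw [this]; exact hPL x
    exact hd.unique hd'
  have hT : (PLR x * PL x).trace = 0 :=
    trace_key (P x) (PL x) (PLR x) (hidem x) h1 (hEL x)
  have hTrev : (PL x * PLR x).trace = 0 := by
    rw [Matrix.trace_mul_comm]; exact hT
  -- set up the derivative of the product
  have hx : x = (x.1, x.2) := rfl
  have hmul : HasDerivAt (fun s => PL (x.1, s) * PL (x.1, s))
      (PLR x * PL x + PL x * PLR x) x.2 := by
    have h := (hPRL x).mul (hPRL x)
    exact h
  -- compose with the (continuous linear) trace map
  let L : Matrix (Fin N) (Fin N) ℂ →L[ℝ] ℂ :=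
    (LinearMap.toContinuousLinearMap (Matrix.traceLinearMap (Fin N) ℂ ℂ)).restrictScalars ℝ
  have htr : HasDerivAt (fun s => (PL (x.1, s) * PL (x.1, s)).trace)
      ((PLR x * PL x + PL x * PLR x).trace) x.2 := by
    have := (L.hasFDerivAt).comp_hasDerivAt x.2 hmul
    exact this
  have hfin := htr.const_mul (1/2 : ℂ)
  have hzero : (1/2 : ℂ) * (PLR x * PL x + PL x * PLR x).trace = 0 := by
    rw [Matrix.trace_add, hT, hTrev]; ring
  rw [hzero] at hfin
  exact hfin
end

section
/- If a Hermitian idempotent P satisfies the Euler–Lagrange equation, then setting M_L = [∂_L P, P] and M_R = [∂_R P, P], one has ∂_L M_R + ∂_R M_L = 0. -/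
attribute [local instance] Matrix.frobeniusNormedAddCommGroup Matrix.frobeniusNormedSpace

open Matrix

attribute [local instance] Matrix.frobeniusNormedRing Matrix.frobeniusNormedAlgebra

/-- If a Hermitian idempotent P satisfies the Euler–Lagrange equation, then with
M_L = [∂_L P, P] and M_R = [∂_R P, P] one has ∂_L M_R + ∂_R M_L = 0. -/
theorem stmt_4 {N : ℕ} (P PL PR PLR : ℝ × ℝ → Matrix (Fin N) (Fin N) ℂ)
    (hPL : ∀ x : ℝ × ℝ, HasDerivAt (fun s => P (s, x.2)) (PL x) x.1)
    (hPR : ∀ x : ℝ × ℝ, HasDerivAt (fun s => P (x.1, s)) (PR x) x.2)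
    (hPLR : ∀ x : ℝ × ℝ, HasDerivAt (fun s => PR (s, x.2)) (PLR x) x.1)
    (hPRL : ∀ x : ℝ × ℝ, HasDerivAt (fun s => PL (x.1, s)) (PLR x) x.2)
    (hidem : ∀ x, P x * P x = P x)
    (hEL : ∀ x, PLR x * P x = P x * PLR x) :
    ∀ (x : ℝ × ℝ) (DL DR : Matrix (Fin N) (Fin N) ℂ),
      HasDerivAt (fun s => PR (s, x.2) * P (s, x.2) - P (s, x.2) * PR (s, x.2)) DL x.1 →
      HasDerivAt (fun s => PL (x.1, s) * P (x.1, s) - P (x.1, s) * PL (x.1, s)) DR x.2 →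
      DL + DR = 0 := by
  intro x DL DR hDL hDR
  have h1 : HasDerivAt (fun s => PR (s, x.2) * P (s, x.2) - P (s, x.2) * PR (s, x.2))
      ((PLR x * P x + PR x * PL x) - (PL x * PR x + P x * PLR x)) x.1 :=
    ((hPLR x).mul (hPL x)).sub ((hPL x).mul (hPLR x))
  have h2 : HasDerivAt (fun s => PL (x.1, s) * P (x.1, s) - P (x.1, s) * PL (x.1, s))
      ((PLR x * P x + PL x * PR x) - (PR x * PL x + P x * PLR x)) x.2 :=
    ((hPRL x).mul (hPR x)).sub ((hPR x).mul (hPRL x))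
  have e1 := hDL.unique h1
  have e2 := hDR.unique h2
  rw [e1, e2, hEL x]
  abel
end

section
/- The function w(ξ_L, ξ_R) = tanh(α)·e^{iβ} with α = (ξ_L/a − ξ_R/b − c)/4, β = (ξ_L/a + ξ_R/b − d)/2 solves the CP¹ Euler–Lagrange equation ∂_L∂_R w (1+|w|²) = 2w̄ ∂_L w ∂_R w. -/
open Complex

lemma coshR_ne (x : ℝ) : Complex.cosh x ≠ 0 := by
  rw [← Complex.ofReal_cosh]; exact_mod_cast (Real.cosh_pos (x := x)).ne'

lemma keyD (C1 C2 : ℂ) (A B : ℝ → ℝ) (p r s : ℝ)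
    (hA : HasDerivAt A p s) (hB : HasDerivAt B r s) :
    HasDerivAt (fun t => (C1 / Complex.cosh (A t) ^ 2
        + C2 * Complex.sinh (A t) / Complex.cosh (A t)) * Complex.exp (Complex.I * (B t)))
      ((-2 * p * C1 * Complex.sinh (A s) / Complex.cosh (A s) ^ 3
        + p * C2 / Complex.cosh (A s) ^ 2
        + Complex.I * r * (C1 / Complex.cosh (A s) ^ 2
            + C2 * Complex.sinh (A s) / Complex.cosh (A s)))
        * Complex.exp (Complex.I * (B s))) s := by
  have hc : Complex.cosh (A s) ≠ 0 := coshR_ne _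
  have hS : HasDerivAt (fun t => Complex.sinh (A t)) (Complex.cosh (A s) * p) s := by
    simpa [mul_comm, Function.comp_def] using ((Complex.hasDerivAt_sinh (A s : ℂ)).comp_ofReal.scomp s hA)
  have hC : HasDerivAt (fun t => Complex.cosh (A t)) (Complex.sinh (A s) * p) s := by
    simpa [mul_comm, Function.comp_def] using ((Complex.hasDerivAt_cosh (A s : ℂ)).comp_ofReal.scomp s hA)
  have hE : HasDerivAt (fun t => Complex.exp (Complex.I * (B t)))
      (Complex.exp (Complex.I * (B s)) * (Complex.I * r)) s := by
    have hB' : HasDerivAt (fun t => Complex.I * ((B t : ℝ) : ℂ)) (Complex.I * r) s :=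
      (hB.ofReal_comp).const_mul Complex.I
    exact hB'.cexp
  have hC2 : HasDerivAt (fun t => Complex.cosh (A t) ^ 2)
      (2 * Complex.cosh (A s) * (Complex.sinh (A s) * p)) s := by
    have h := hC.mul hC
    rw [show ((fun t => Complex.cosh (A t)) * fun t => Complex.cosh (A t))
        = (fun t => Complex.cosh (A t) ^ 2) from funext fun t => (sq _).symm] at h
    convert h using 1
    · rfl
    ring
  have h1 := (hasDerivAt_const s C1).div hC2 (pow_ne_zero 2 hc)
  have h2 := (hS.const_mul C2).div hC hc
  have h := (h1.add h2).mul hE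
  convert h using 1
  · rfl
  · rfl
  have hid : Complex.cosh (A s) ^ 2 - Complex.sinh (A s) ^ 2 = 1 := Complex.cosh_sq_sub_sinh_sq _
  simp only [Pi.add_apply, Pi.div_apply]
  field_simp
  linear_combination (-((p : ℂ) * Complex.cosh (A s) * C2)) * hid

/-- Partial derivative in the first (left light-cone) variable. -/
noncomputable def pdL (f : ℝ × ℝ → ℂ) (x : ℝ × ℝ) : ℂ :=
  deriv (fun s => f (s, x.2)) x.1

/-- Partial derivative in the second (right light-cone) variable. -/
noncomputable def pdR (f : ℝ × ℝ → ℂ) (x : ℝ × ℝ) : ℂ :=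
  deriv (fun s => f (x.1, s)) x.2

set_option maxHeartbeats 1000000 in
/-- w = tanh(α) e^{iβ}, α = (ξ_L/a − ξ_R/b − c)/4, β = (ξ_L/a + ξ_R/b − d)/2, solves the
CP¹ Euler–Lagrange equation ∂_L∂_R w (1+|w|²) = 2 w̄ ∂_L w ∂_R w. -/
theorem stmt_12 (a b c d : ℝ) (ha : a ≠ 0) (hb : b ≠ 0)
    (w : ℝ × ℝ → ℂ)
    (hw : ∀ x : ℝ × ℝ, w x =
      ((Real.tanh ((x.1 / a - x.2 / b - c) / 4) : ℝ) : ℂ) *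
        Complex.exp (Complex.I * (((x.1 / a + x.2 / b - d) / 2 : ℝ) : ℂ)))
    (x : ℝ × ℝ) :
    pdL (pdR w) x * (1 + w x * starRingEnd ℂ (w x)) =
      2 * starRingEnd ℂ (w x) * pdL w x * pdR w x := by
  obtain ⟨x1, x2⟩ := x
  have hw' : ∀ u v : ℝ, w (u, v) =
      ((0 : ℂ) / Complex.cosh ((u / a - v / b - c) / 4 : ℝ) ^ 2
        + 1 * Complex.sinh ((u / a - v / b - c) / 4 : ℝ)
          / Complex.cosh ((u / a - v / b - c) / 4 : ℝ))
        * Complex.exp (Complex.I * ((u / a + v / b - d) / 2 : ℝ)) := by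
    intro u v
    rw [hw (u, v)]
    simp only [Complex.ofReal_tanh, Complex.tanh_eq_sinh_div_cosh]
    ring
  -- pdR w everywhere
  have hpdR : ∀ u v : ℝ, pdR w (u, v) =
      ((-(1 / (b : ℂ)) / 4) / Complex.cosh ((u / a - v / b - c) / 4 : ℝ) ^ 2
        + (Complex.I * ((1 / (b : ℂ)) / 2)) * Complex.sinh ((u / a - v / b - c) / 4 : ℝ)
          / Complex.cosh ((u / a - v / b - c) / 4 : ℝ))
        * Complex.exp (Complex.I * ((u / a + v / b - d) / 2 : ℝ)) := by
    intro u v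
    have hA : HasDerivAt (fun s : ℝ => (u / a - s / b - c) / 4) (-(1 / b) / 4) v :=
      ((((hasDerivAt_id v).div_const b).const_sub (u / a)).sub_const c).div_const 4
    have hB : HasDerivAt (fun s : ℝ => (u / a + s / b - d) / 2) ((1 / b) / 2) v :=
      ((((hasDerivAt_id v).div_const b).const_add (u / a)).sub_const d).div_const 2
    have heq : (fun s => w (u, s)) = fun s =>
        ((0 : ℂ) / Complex.cosh ((u / a - s / b - c) / 4 : ℝ) ^ 2
          + 1 * Complex.sinh ((u / a - s / b - c) / 4 : ℝ)
            / Complex.cosh ((u / a - s / b - c) / 4 : ℝ))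
          * Complex.exp (Complex.I * ((u / a + s / b - d) / 2 : ℝ)) :=
      funext fun s => hw' u s
    have h := keyD 0 1 _ _ _ _ v hA hB
    show deriv (fun s => w (u, s)) v = _
    rw [heq, h.deriv]
    push_cast
    ring
  have hA1 : HasDerivAt (fun s : ℝ => (s / a - x2 / b - c) / 4) (1 / a / 4) x1 := by
    simpa using ((((hasDerivAt_id x1).div_const a).sub_const (x2 / b)).sub_const c).div_const 4
  have hB1 : HasDerivAt (fun s : ℝ => (s / a + x2 / b - d) / 2) (1 / a / 2) x1 := by
    simpa using ((((hasDerivAt_id x1).div_const a).add_const (x2 / b)).sub_const d).div_const 2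
  have hpdL : pdL w (x1, x2) =
      ((1 / (a : ℂ) / 4) / Complex.cosh ((x1 / a - x2 / b - c) / 4 : ℝ) ^ 2 + Complex.I * (1 / (a : ℂ) / 2) * Complex.sinh ((x1 / a - x2 / b - c) / 4 : ℝ) / Complex.cosh ((x1 / a - x2 / b - c) / 4 : ℝ)) * Complex.exp (Complex.I * ((x1 / a + x2 / b - d) / 2 : ℝ)) := by
    have heq : (fun s => w (s, x2)) = fun s =>
        ((0 : ℂ) / Complex.cosh ((s / a - x2 / b - c) / 4 : ℝ) ^ 2
          + 1 * Complex.sinh ((s / a - x2 / b - c) / 4 : ℝ)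
            / Complex.cosh ((s / a - x2 / b - c) / 4 : ℝ))
          * Complex.exp (Complex.I * ((s / a + x2 / b - d) / 2 : ℝ)) :=
      funext fun s => hw' s x2
    have h := keyD 0 1 _ _ _ _ x1 hA1 hB1
    show deriv (fun s => w (s, x2)) x1 = _
    rw [heq, h.deriv]
    push_cast
    ring
  have hpdLR : pdL (pdR w) (x1, x2) =
      ((-2 * (1 / (a : ℂ) / 4) * (-(1 / (b : ℂ)) / 4)) * Complex.sinh ((x1 / a - x2 / b - c) / 4 : ℝ) / Complex.cosh ((x1 / a - x2 / b - c) / 4 : ℝ) ^ 3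
        + (1 / (a : ℂ) / 4) * (Complex.I * ((1 / (b : ℂ)) / 2)) / Complex.cosh ((x1 / a - x2 / b - c) / 4 : ℝ) ^ 2
        + Complex.I * (1 / (a : ℂ) / 2) * ((-(1 / (b : ℂ)) / 4) / Complex.cosh ((x1 / a - x2 / b - c) / 4 : ℝ) ^ 2
            + (Complex.I * ((1 / (b : ℂ)) / 2)) * Complex.sinh ((x1 / a - x2 / b - c) / 4 : ℝ) / Complex.cosh ((x1 / a - x2 / b - c) / 4 : ℝ))) * Complex.exp (Complex.I * ((x1 / a + x2 / b - d) / 2 : ℝ)) := by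
    have heq : (fun s => pdR w (s, x2)) = fun s =>
        ((-(1 / (b : ℂ)) / 4) / Complex.cosh ((s / a - x2 / b - c) / 4 : ℝ) ^ 2
          + (Complex.I * ((1 / (b : ℂ)) / 2)) * Complex.sinh ((s / a - x2 / b - c) / 4 : ℝ)
            / Complex.cosh ((s / a - x2 / b - c) / 4 : ℝ))
          * Complex.exp (Complex.I * ((s / a + x2 / b - d) / 2 : ℝ)) :=
      funext fun s => hpdR s x2
    have h := keyD (-(1 / (b : ℂ)) / 4) (Complex.I * ((1 / (b : ℂ)) / 2)) _ _ _ _ x1 hA1 hB1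
    show deriv (fun s => pdR w (s, x2)) x1 = _
    rw [heq, h.deriv]
    push_cast
    ring
  have hwx : w (x1, x2) = (Complex.sinh ((x1 / a - x2 / b - c) / 4 : ℝ) / Complex.cosh ((x1 / a - x2 / b - c) / 4 : ℝ)) * Complex.exp (Complex.I * ((x1 / a + x2 / b - d) / 2 : ℝ)) := by
    rw [hw (x1, x2), Complex.ofReal_tanh, Complex.tanh_eq_sinh_div_cosh]
  have hcS : starRingEnd ℂ (Complex.sinh ((x1 / a - x2 / b - c) / 4 : ℝ)) = Complex.sinh ((x1 / a - x2 / b - c) / 4 : ℝ) := by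
    rw [← Complex.ofReal_sinh]; exact Complex.conj_ofReal _
  have hcC : starRingEnd ℂ (Complex.cosh ((x1 / a - x2 / b - c) / 4 : ℝ)) = Complex.cosh ((x1 / a - x2 / b - c) / 4 : ℝ) := by
    rw [← Complex.ofReal_cosh]; exact Complex.conj_ofReal _
  have hcE : starRingEnd ℂ (Complex.exp (Complex.I * ((x1 / a + x2 / b - d) / 2 : ℝ))) = Complex.exp (-(Complex.I * ((x1 / a + x2 / b - d) / 2 : ℝ))) := by
    rw [← Complex.exp_conj,
      show starRingEnd ℂ (Complex.I * ((x1 / a + x2 / b - d) / 2 : ℝ))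
        = -(Complex.I * ((x1 / a + x2 / b - d) / 2 : ℝ)) by
          rw [map_mul, Complex.conj_I, Complex.conj_ofReal]; ring]
  have hconj : starRingEnd ℂ (w (x1, x2)) = (Complex.sinh ((x1 / a - x2 / b - c) / 4 : ℝ) / Complex.cosh ((x1 / a - x2 / b - c) / 4 : ℝ)) * Complex.exp (-(Complex.I * ((x1 / a + x2 / b - d) / 2 : ℝ))) := by
    rw [hwx, map_mul, map_div₀, hcS, hcC, hcE]
  have hC0 : (Complex.cosh ((x1 / a - x2 / b - c) / 4 : ℝ)) ≠ 0 := coshR_ne _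
  have hE0 : (Complex.exp (Complex.I * ((x1 / a + x2 / b - d) / 2 : ℝ))) ≠ 0 := Complex.exp_ne_zero _
  have hid : (Complex.cosh ((x1 / a - x2 / b - c) / 4 : ℝ)) ^ 2 - (Complex.sinh ((x1 / a - x2 / b - c) / 4 : ℝ)) ^ 2 = 1 := Complex.cosh_sq_sub_sinh_sq _
  have ha' : (a : ℂ) ≠ 0 := by exact_mod_cast ha
  have hb' : (b : ℂ) ≠ 0 := by exact_mod_cast hb
  rw [hpdLR, hpdL, hpdR x1 x2, hconj, hwx]
  set S := Complex.sinh ((x1 / a - x2 / b - c) / 4 : ℝ) with hS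
  set C := Complex.cosh ((x1 / a - x2 / b - c) / 4 : ℝ) with hC
  set E := Complex.exp (Complex.I * ((x1 / a + x2 / b - d) / 2 : ℝ)) with hE
  set K := Complex.exp (-(Complex.I * ((x1 / a + x2 / b - d) / 2 : ℝ))) with hK
  have hEK : E * K = 1 := by
    rw [hE, hK, ← Complex.exp_add]; simp
  have hCD : C * C⁻¹ = 1 := mul_inv_cancel₀ hC0
  have hI2 : Complex.I ^ 2 = -1 := Complex.I_sq
  clear hS hC hE hK hpdL hpdLR hpdR hwx hconj hw hw' hA1 hB1 hcS hcC hcE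
  clear_value S C E K
  linear_combination
      (-((a:ℂ)⁻¹ * (b:ℂ)⁻¹ * E * S * (2 * C⁻¹ ^ 3 + C⁻¹ ^ 5) / 8)) * hid
    + ((a:ℂ)⁻¹ * (b:ℂ)⁻¹ * E * S * (C * C⁻¹ + 1) * (C⁻¹ / 4 + C⁻¹ ^ 3 / 8)) * hCD
    + ((a:ℂ)⁻¹ * (b:ℂ)⁻¹ * E * (S * C⁻¹ ^ 5 / 8 + S ^ 3 * C⁻¹ ^ 3 / 4 + S ^ 3 * C⁻¹ ^ 5 / 8)) * hEK
    + ((a:ℂ)⁻¹ * (b:ℂ)⁻¹ * S * C⁻¹ * E / 4 - (a:ℂ)⁻¹ * (b:ℂ)⁻¹ * S ^ 3 * C⁻¹ ^ 3 * E ^ 2 * K / 4) * hI2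
end
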